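/- Let d ≥ 2 be an integer and let v : {0,1}^d → ℝ be a coalitional game. The Shapley values φ(v) ∈ ℝ^d are the unique minimizer of the Shapley regression loss h_v(φ) over the affine constraint set {φ ∈ ℝ^d : 1^⊤φ = v(1) − v(0)}; that is, φ(v) satisfies 1^⊤φ(v) = v(1) − v(0), and every φ ≠ φ(v) with 1^⊤φ = v(1) − v(0) satisfies h_v(φ) > h_v(φ(v)). -/

import Mathlib

open scoped BigOperators

/-- Normalizing constant `Q = ∑_{k=1}^{d-1} (d-1)/(k(d-k))` of the Shapley kernel. -/
noncomputable def shapQ (d : ℕ) : ℝ :=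
  ∑ k ∈ Finset.Icc 1 (d - 1), ((d : ℝ) - 1) / ((k : ℝ) * ((d : ℝ) - (k : ℝ)))

/-- Shapley kernel distribution on subsets `s ⊆ {1,…,d}`. -/
noncomputable def pSh (d : ℕ) (s : Finset (Fin d)) : ℝ :=
  if 0 < s.card ∧ s.card < d then
    (((d : ℝ) - 1) /
      ((Nat.choose d s.card : ℝ) * (s.card : ℝ) * ((d : ℝ) - (s.card : ℝ)))) / shapQ d
  else 0

/-- Shapley regression loss `h_v(φ) = E_{s∼p_Sh}[(v(s) - v(0) - sᵀφ)²]`. -/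
noncomputable def hLoss (d : ℕ) (v : Finset (Fin d) → ℝ)
    (φ : EuclideanSpace ℝ (Fin d)) : ℝ :=
  ∑ s : Finset (Fin d), pSh d s * (v s - v ∅ - ∑ i ∈ s, φ i) ^ 2

/-- Shapley values `φ_i(v) = (1/d) ∑_{s : i ∉ s} C(d-1, |s|)⁻¹ (v(s+e_i) - v(s))`. -/
noncomputable def shapleyValue (d : ℕ) (v : Finset (Fin d) → ℝ) :
    EuclideanSpace ℝ (Fin d) :=
  WithLp.toLp 2 (fun i => (1 / (d : ℝ)) *
    ∑ s ∈ Finset.univ.filter (fun s : Finset (Fin d) => i ∉ s),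
      ((Nat.choose (d - 1) s.card : ℝ))⁻¹ * (v (insert i s) - v s))

noncomputable def qc (d k : ℕ) : ℝ := (1 / (d:ℝ)) * ((Nat.choose (d-1) k : ℝ))⁻¹

noncomputable def Pw (d k : ℕ) : ℝ :=
  (((d : ℝ) - 1) / ((Nat.choose d k : ℝ) * (k : ℝ) * ((d : ℝ) - (k : ℝ)))) / shapQ d

lemma shapQ_pos {d : ℕ} (hd : 2 ≤ d) : 0 < shapQ d := by
  apply Finset.sum_pos
  · intro k hk
    simp only [Finset.mem_Icc] at hk
    have h1 : (0:ℝ) < (k:ℝ) := by exact_mod_cast hk.1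
    have h2 : (k:ℝ) < (d:ℝ) := by
      have : k < d := by omega
      exact_mod_cast this
    have h3 : (1:ℝ) < (d:ℝ) := by exact_mod_cast (by omega : 1 < d)
    exact div_pos (by linarith) (mul_pos h1 (by linarith))
  · exact ⟨1, by simp only [Finset.mem_Icc]; omega⟩

lemma Pw_pos {d k : ℕ} (hd : 2 ≤ d) (h0 : 0 < k) (h1 : k < d) : 0 < Pw d k := by
  unfold Pw
  have hc : 0 < (Nat.choose d k : ℝ) := by
    exact_mod_cast Nat.choose_pos (le_of_lt h1)
  have hk : (0:ℝ) < (k:ℝ) := by exact_mod_cast h0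
  have hkd : (k:ℝ) < (d:ℝ) := by exact_mod_cast h1
  have h3 : (1:ℝ) < (d:ℝ) := by exact_mod_cast (by omega : 1 < d)
  refine div_pos (div_pos (by linarith) ?_) (shapQ_pos hd)
  exact mul_pos (mul_pos hc hk) (by linarith)

/-- key identity (I): `Pw d (k+1) = ((d-1)/(d·Q)) · (qc d k + qc d (k+1))`. -/
lemma Pw_eq {d k : ℕ} (hd : 2 ≤ d) (hk : k ≤ d - 2) :
    Pw d (k+1) = (((d:ℝ)-1) / ((d:ℝ) * shapQ d)) * (qc d k + qc d (k+1)) := by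
  have hQ := shapQ_pos hd
  set a := Nat.choose (d-1) k with ha
  set b := Nat.choose (d-1) (k+1) with hb
  set n := Nat.choose d (k+1) with hn
  have hB : b * (k+1) = a * (d - 1 - k) := Nat.choose_succ_right_eq (d-1) k
  have hS : d * a = n * (k+1) := by
    have := Nat.add_one_mul_choose_eq (d-1) k
    simpa [Nat.succ_eq_add_one, (by omega : d - 1 + 1 = d)] using this
  have hdk : d - 1 - k = d - (k+1) := by omega
  have hnat : d * d * (a * b) = n * (k+1) * (d - (k+1)) * (a + b) := by
    set c := d - 1 - k with hcdef
    have h2 : d - (k+1) = c := by omega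
    have hc' : d = c + (k+1) := by omega
    rw [h2]
    calc d*d*(a*b) = (d*a)*(d*b) := by ring
      _ = (n*(k+1))*(d*b) := by rw [hS]
      _ = (n*(k+1))*((c+(k+1))*b) := by rw [← hc']
      _ = (n*(k+1))*(c*b + b*(k+1)) := by ring
      _ = (n*(k+1))*(c*b + a*c) := by rw [hB]
      _ = n*(k+1)*c*(a+b) := by ring
  have ha0 : 0 < a := Nat.choose_pos (by omega)
  have hb0 : 0 < b := Nat.choose_pos (by omega)
  have hn0 : 0 < n := Nat.choose_pos (by omega)
  have hA : (0:ℝ) < (a:ℝ) := by exact_mod_cast ha0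
  have hB0 : (0:ℝ) < (b:ℝ) := by exact_mod_cast hb0
  have hN : (0:ℝ) < (n:ℝ) := by exact_mod_cast hn0
  have hd0 : (0:ℝ) < (d:ℝ) := by positivity
  have hdk1 : (0:ℝ) < ((d:ℝ) - ((k:ℝ)+1)) := by
    have : k + 1 < d := by omega
    have := (Nat.cast_lt (α := ℝ)).2 this
    push_cast at this ⊢; linarith
  have hcast : (d:ℝ) * d * (a * b) = (n:ℝ) * ((k:ℝ)+1) * ((d:ℝ) - ((k:ℝ)+1)) * ((a:ℝ) + b) := by
    have := congrArg (fun m : ℕ => (m : ℝ)) hnat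
    push_cast [Nat.cast_sub (by omega : k + 1 ≤ d)] at this
    convert this using 1 <;> ring
  unfold Pw qc
  rw [← ha, ← hb, ← hn]
  push_cast
  rw [div_div]
  rw [div_eq_iff (by positivity)]
  field_simp
  linear_combination ((d:ℝ)-1) * hcast

/-- key identity (II): `C(d-2,k)·(q_k + q_{k+1}) = 1/(d-1)`. -/
lemma cr_eq {d k : ℕ} (hd : 2 ≤ d) (hk : k ≤ d - 2) :
    (Nat.choose (d-2) k : ℝ) * (qc d k + qc d (k+1)) = 1 / ((d:ℝ) - 1) := by
  set m := Nat.choose (d-2) k with hm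
  set a := Nat.choose (d-1) k with ha
  set b := Nat.choose (d-1) (k+1) with hb
  have h1 : (d-1) * m = b * (k+1) := by
    have := Nat.add_one_mul_choose_eq (d-2) k
    simpa [Nat.succ_eq_add_one, (by omega : d - 2 + 1 = d - 1)] using this
  have h2 : b * (k+1) = a * (d - 1 - k) := Nat.choose_succ_right_eq (d-1) k
  have hnat : (d-1) * m * (a + b) = d * (a * b) := by
    set c := d - 1 - k with hc
    have hc' : d = c + (k+1) := by omega
    calc (d-1)*m*(a+b) = ((d-1)*m)*a + ((d-1)*m)*b := by ring
      _ = (b*(k+1))*a + (a*c)*b := by rw [h1, h2]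
      _ = a*b*((k+1)+c) := by ring
      _ = a*b*d := by rw [(by omega : (k+1)+c = d)]
      _ = d*(a*b) := by ring
  have ha0 : 0 < a := Nat.choose_pos (by omega)
  have hb0 : 0 < b := Nat.choose_pos (by omega)
  have hA : (0:ℝ) < (a:ℝ) := by exact_mod_cast ha0
  have hB0 : (0:ℝ) < (b:ℝ) := by exact_mod_cast hb0
  have hd0 : (0:ℝ) < (d:ℝ) := by positivity
  have hd1 : (0:ℝ) < (d:ℝ) - 1 := by
    have : (1:ℝ) < (d:ℝ) := by exact_mod_cast (by omega : 1 < d)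
    linarith
  have hcast : ((d:ℝ)-1) * m * ((a:ℝ) + b) = (d:ℝ) * ((a:ℝ) * b) := by
    have := congrArg (fun x : ℕ => (x : ℝ)) hnat
    push_cast [Nat.cast_sub (by omega : 1 ≤ d)] at this
    convert this using 1 <;> ring
  unfold qc
  rw [← ha, ← hb]
  field_simp
  linear_combination hcast

/-- efficiency coefficient identity: `k·q_{k-1} = (d-k)·q_k` for `1 ≤ k ≤ d-1`. -/
lemma eff_eq {d k : ℕ} (hd : 2 ≤ d) (h1 : 1 ≤ k) (h2 : k ≤ d - 1) :
    (k:ℝ) * qc d (k-1) = ((d:ℝ) - (k:ℝ)) * qc d k := by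
  set a := Nat.choose (d-1) (k-1) with ha
  set b := Nat.choose (d-1) k with hb
  have hnat : b * k = a * (d - k) := by
    have := Nat.choose_succ_right_eq (d-1) (k-1)
    simpa [(by omega : k - 1 + 1 = k), (by omega : d - 1 - (k-1) = d - k)] using this
  have ha0 : 0 < a := Nat.choose_pos (by omega)
  have hb0 : 0 < b := Nat.choose_pos (by omega)
  have hA : (0:ℝ) < (a:ℝ) := by exact_mod_cast ha0
  have hB0 : (0:ℝ) < (b:ℝ) := by exact_mod_cast hb0
  have hd0 : (0:ℝ) < (d:ℝ) := by positivity
  have hcast : (b:ℝ) * k = (a:ℝ) * ((d:ℝ) - (k:ℝ)) := by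
    have := congrArg (fun x : ℕ => (x : ℝ)) hnat
    push_cast [Nat.cast_sub (by omega : k ≤ d)] at this
    exact this
  unfold qc
  rw [← ha, ← hb]
  field_simp
  linear_combination hcast

/-- sum of `r_{|t|}` over the powerset of a `(d-2)`-set equals 1. -/
lemma sum_r_eq {d : ℕ} (hd : 2 ≤ d) {α : Type*} [DecidableEq α] {A : Finset α}
    (hA : A.card = d - 2) :
    ∑ t ∈ A.powerset, (qc d t.card + qc d (t.card + 1)) = 1 := by
  rw [Finset.sum_powerset A (fun t => qc d t.card + qc d (t.card + 1))]
  have : ∀ j ∈ Finset.range (A.card + 1),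
      ∑ t ∈ Finset.powersetCard j A, (qc d t.card + qc d (t.card + 1))
        = 1 / ((d:ℝ) - 1) := by
    intro j hj
    rw [Finset.sum_powersetCard j A (fun k => qc d k + qc d (k+1))]
    rw [hA]
    have hj' : j ≤ d - 2 := by
      simp only [Finset.mem_range, hA] at hj; omega
    rw [nsmul_eq_mul, cr_eq hd hj']
  rw [Finset.sum_congr rfl this, Finset.sum_const, hA]
  have hd1 : ((d:ℝ) - 1) ≠ 0 := by
    have : (1:ℝ) < (d:ℝ) := by exact_mod_cast (by omega : 1 < d)
    linarith
  have hcard : ((d - 2 + 1 : ℕ) : ℝ) = (d:ℝ) - 1 := by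
    push_cast [Nat.cast_sub (by omega : 2 ≤ d)]; ring
  rw [Finset.card_range, nsmul_eq_mul, hcard]
  field_simp

lemma pSh_eq_Pw {d : ℕ} {s : Finset (Fin d)} (h0 : 0 < s.card) (h1 : s.card < d) :
    pSh d s = Pw d s.card := by
  rw [pSh, if_pos ⟨h0, h1⟩]; rfl

lemma pSh_nonneg {d : ℕ} (hd : 2 ≤ d) (s : Finset (Fin d)) : 0 ≤ pSh d s := by
  rw [pSh]
  split
  · rename_i h
    have := Pw_pos hd h.1 h.2
    rw [Pw] at this
    exact le_of_lt this
  · exact le_refl _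

lemma shapleyValue_eq (d : ℕ) (v : Finset (Fin d) → ℝ) (i : Fin d) :
    shapleyValue d v i =
      ∑ s ∈ Finset.univ.filter (fun s : Finset (Fin d) => i ∉ s),
        qc d s.card * (v (insert i s) - v s) := by
  rw [shapleyValue, WithLp.ofLp_toLp, Finset.mul_sum]
  refine Finset.sum_congr rfl fun s _ => ?_
  rw [qc]; ring

/-- reindexing along `insert i`. -/
lemma sum_bij_insert {d : ℕ} (i : Fin d) (Q : Finset (Fin d) → Prop) [DecidablePred Q]
    (F : Finset (Fin d) → ℝ) :
    ∑ s ∈ Finset.univ.filter (fun s : Finset (Fin d) => i ∉ s ∧ Q s), F (insert i s)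
      = ∑ s ∈ Finset.univ.filter (fun s : Finset (Fin d) => i ∈ s ∧ Q (s.erase i)), F s := by
  refine Finset.sum_nbij' (fun s => insert i s) (fun s => s.erase i) ?_ ?_ ?_ ?_ ?_
  · intro s hs
    simp only [Finset.mem_filter, Finset.mem_univ, true_and] at hs ⊢
    exact ⟨Finset.mem_insert_self i s, by rw [Finset.erase_insert hs.1]; exact hs.2⟩
  · intro s hs
    simp only [Finset.mem_filter, Finset.mem_univ, true_and] at hs ⊢
    exact ⟨Finset.notMem_erase i s, hs.2⟩
  · intro s hs
    simp only [Finset.mem_filter, Finset.mem_univ, true_and] at hs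
    exact Finset.erase_insert hs.1
  · intro s hs
    simp only [Finset.mem_filter, Finset.mem_univ, true_and] at hs
    exact Finset.insert_erase hs.1
  · intro s _; rfl

open Finset in
lemma shap_split {d : ℕ} (v : Finset (Fin d) → ℝ) (i j : Fin d) (hij : i ≠ j) :
    shapleyValue d v i
      = ∑ t ∈ Finset.univ.filter (fun s : Finset (Fin d) => i ∉ s ∧ j ∉ s),
          (qc d t.card * (v (insert i t) - v t)
            + qc d (t.card + 1) * (v (insert i (insert j t)) - v (insert j t))) := by
  rw [shapleyValue_eq d v i]
  rw [← Finset.sum_filter_add_sum_filter_not (Finset.univ.filter (fun s => i ∉ s))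
    (fun s => j ∉ s) (fun s => qc d s.card * (v (insert i s) - v s))]
  rw [Finset.filter_filter, Finset.filter_filter]
  conv_rhs => rw [Finset.sum_add_distrib]
  congr 1
  -- second piece
  have h1 : (Finset.univ.filter (fun s : Finset (Fin d) => i ∉ s ∧ ¬ j ∉ s))
      = Finset.univ.filter (fun s : Finset (Fin d) => j ∈ s ∧ i ∉ s.erase j) := by
    ext s
    simp only [Finset.mem_filter, Finset.mem_univ, true_and, not_not, Finset.mem_erase]
    constructor
    · rintro ⟨hi, hj⟩; exact ⟨hj, fun h => hi h.2⟩
    · rintro ⟨hj, hi⟩; exact ⟨fun h => hi ⟨hij, h⟩, hj⟩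
  rw [h1, ← sum_bij_insert j (fun s => i ∉ s) (fun s => qc d s.card * (v (insert i s) - v s))]
  have h2 : (Finset.univ.filter (fun s : Finset (Fin d) => j ∉ s ∧ i ∉ s))
      = Finset.univ.filter (fun s : Finset (Fin d) => i ∉ s ∧ j ∉ s) := by
    ext s
    simp only [Finset.mem_filter, Finset.mem_univ, true_and, and_comm]
  rw [h2]
  refine Finset.sum_congr rfl fun t ht => ?_
  simp only [Finset.mem_filter, Finset.mem_univ, true_and] at ht
  rw [Finset.card_insert_of_notMem ht.2]

open Finset in
lemma shap_diff {d : ℕ} (v : Finset (Fin d) → ℝ) (i j : Fin d) (hij : i ≠ j) :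
    shapleyValue d v i - shapleyValue d v j
      = ∑ t ∈ Finset.univ.filter (fun s : Finset (Fin d) => i ∉ s ∧ j ∉ s),
          (qc d t.card + qc d (t.card + 1)) * (v (insert i t) - v (insert j t)) := by
  rw [shap_split v i j hij, shap_split v j i hij.symm]
  have h2 : (Finset.univ.filter (fun s : Finset (Fin d) => j ∉ s ∧ i ∉ s))
      = Finset.univ.filter (fun s : Finset (Fin d) => i ∉ s ∧ j ∉ s) := by
    ext s
    simp only [Finset.mem_filter, Finset.mem_univ, true_and, and_comm]
  rw [h2, ← Finset.sum_sub_distrib]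
  refine Finset.sum_congr rfl fun t ht => ?_
  rw [Finset.insert_comm j i t]
  ring

noncomputable def gfun (d : ℕ) (v : Finset (Fin d) → ℝ) (i : Fin d) : ℝ :=
  ∑ s ∈ Finset.univ.filter (fun s : Finset (Fin d) => i ∈ s),
    pSh d s * (v s - v ∅ - ∑ l ∈ s, shapleyValue d v l)

open Finset in
lemma gfun_split {d : ℕ} (v : Finset (Fin d) → ℝ) (i j : Fin d) (hij : i ≠ j) :
    gfun d v i
      = (∑ s ∈ Finset.univ.filter (fun s : Finset (Fin d) => i ∈ s ∧ j ∈ s),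
          pSh d s * (v s - v ∅ - ∑ l ∈ s, shapleyValue d v l))
        + ∑ t ∈ Finset.univ.filter (fun s : Finset (Fin d) => i ∉ s ∧ j ∉ s),
            pSh d (insert i t) *
              (v (insert i t) - v ∅ - ∑ l ∈ insert i t, shapleyValue d v l) := by
  rw [gfun]
  rw [← Finset.sum_filter_add_sum_filter_not (Finset.univ.filter (fun s : Finset (Fin d) => i ∈ s))
    (fun s => j ∈ s) (fun s => pSh d s * (v s - v ∅ - ∑ l ∈ s, shapleyValue d v l))]
  rw [Finset.filter_filter, Finset.filter_filter]
  congr 1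
  rw [sum_bij_insert i (fun s => j ∉ s)
    (fun s => pSh d s * (v s - v ∅ - ∑ l ∈ s, shapleyValue d v l))]
  apply Finset.sum_congr
  · ext s
    simp only [Finset.mem_filter, Finset.mem_univ, true_and, Finset.mem_erase]
    constructor
    · rintro ⟨hi, hj⟩; exact ⟨hi, fun h => hj h.2⟩
    · rintro ⟨hi, hj⟩; exact ⟨hi, fun h => hj ⟨hij.symm, h⟩⟩
  · intro s _; rfl

open Finset in
lemma g_eq {d : ℕ} (hd : 2 ≤ d) (v : Finset (Fin d) → ℝ) (i j : Fin d) :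
    gfun d v i = gfun d v j := by
  rcases eq_or_ne i j with rfl | hij
  · rfl
  have hQ := shapQ_pos hd
  set φ := shapleyValue d v with hφ
  rw [gfun_split v i j hij, gfun_split v j i hij.symm]
  have hcomm : (Finset.univ.filter (fun s : Finset (Fin d) => j ∈ s ∧ i ∈ s))
      = Finset.univ.filter (fun s : Finset (Fin d) => i ∈ s ∧ j ∈ s) := by
    ext s; simp only [Finset.mem_filter, Finset.mem_univ, true_and, and_comm]
  have hcomm2 : (Finset.univ.filter (fun s : Finset (Fin d) => j ∉ s ∧ i ∉ s))
      = Finset.univ.filter (fun s : Finset (Fin d) => i ∉ s ∧ j ∉ s) := by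
    ext s; simp only [Finset.mem_filter, Finset.mem_univ, true_and, and_comm]
  rw [hcomm, hcomm2]
  have hsuff :
      ∑ t ∈ Finset.univ.filter (fun s : Finset (Fin d) => i ∉ s ∧ j ∉ s),
          pSh d (insert i t) * (v (insert i t) - v ∅ - ∑ l ∈ insert i t, φ l)
        = ∑ t ∈ Finset.univ.filter (fun s : Finset (Fin d) => i ∉ s ∧ j ∉ s),
            pSh d (insert j t) * (v (insert j t) - v ∅ - ∑ l ∈ insert j t, φ l) := by
    -- key computation
    set T := Finset.univ.filter (fun s : Finset (Fin d) => i ∉ s ∧ j ∉ s) with hT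
    have hcard : ∀ t ∈ T, t.card ≤ d - 2 := by
      intro t ht
      simp only [hT, Finset.mem_filter, Finset.mem_univ, true_and] at ht
      have h1 : i ∉ insert j t := by
        simp only [Finset.mem_insert]; rintro (h | h); exact hij h; exact ht.1 h
      have := Finset.card_le_univ (insert i (insert j t))
      rw [Finset.card_insert_of_notMem h1, Finset.card_insert_of_notMem ht.2,
        Fintype.card_fin] at this
      omega
    set D := φ i - φ j with hD
    set Cq := (((d:ℝ) - 1) / ((d:ℝ) * shapQ d)) with hCq
    have hterm : ∀ (l : Fin d) (t : Finset (Fin d)), t ∈ T → l ∉ t → t.card ≤ d - 2 →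
        pSh d (insert l t) * (v (insert l t) - v ∅ - ∑ m ∈ insert l t, φ m)
          = Cq * ((qc d t.card + qc d (t.card + 1))
              * (v (insert l t) - v ∅ - φ l - ∑ m ∈ t, φ m)) := by
      intro l t ht hl htc
      have hc : (insert l t).card = t.card + 1 := Finset.card_insert_of_notMem hl
      have h0 : 0 < (insert l t).card := by omega
      have h1 : (insert l t).card < d := by omega
      rw [pSh_eq_Pw h0 h1, hc, Pw_eq hd htc, Finset.sum_insert hl]
      ring
    have hrsum : ∑ t ∈ T, (qc d t.card + qc d (t.card + 1)) = 1 := by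
      have hTpow : T = (Finset.univ \ {i, j}).powerset := by
        ext s
        simp only [hT, Finset.mem_filter, Finset.mem_univ, true_and, Finset.mem_powerset,
          Finset.subset_iff, Finset.mem_sdiff, Finset.mem_insert, Finset.mem_singleton]
        constructor
        · rintro ⟨hi, hj⟩ x hx
          rintro (rfl | rfl)
          exacts [hi hx, hj hx]
        · intro h
          exact ⟨fun hi => h hi (Or.inl rfl), fun hj => h hj (Or.inr rfl)⟩
      have hAcard : (Finset.univ \ ({i, j} : Finset (Fin d))).card = d - 2 := by
        rw [Finset.card_sdiff_of_subset (Finset.subset_univ _), Finset.card_univ, Fintype.card_fin]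
        rw [Finset.card_insert_of_notMem (by simp [hij]), Finset.card_singleton]
      rw [hTpow]
      exact sum_r_eq hd hAcard
    have hDsum : D = ∑ t ∈ T, (qc d t.card + qc d (t.card + 1))
        * (v (insert i t) - v (insert j t)) := shap_diff v i j hij
    calc ∑ t ∈ T, pSh d (insert i t) * (v (insert i t) - v ∅ - ∑ l ∈ insert i t, φ l)
        = ∑ t ∈ T, Cq * ((qc d t.card + qc d (t.card + 1))
            * (v (insert i t) - v ∅ - φ i - ∑ m ∈ t, φ m)) := by
          refine Finset.sum_congr rfl fun t ht => ?_
          have ht' := ht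
          simp only [hT, Finset.mem_filter, Finset.mem_univ, true_and] at ht'
          exact hterm i t ht ht'.1 (hcard t ht)
      _ = ∑ t ∈ T, Cq * ((qc d t.card + qc d (t.card + 1))
            * (v (insert j t) - v ∅ - φ j - ∑ m ∈ t, φ m)) := by
          rw [← sub_eq_zero, ← Finset.sum_sub_distrib]
          have : ∀ t ∈ T, Cq * ((qc d t.card + qc d (t.card + 1))
                * (v (insert i t) - v ∅ - φ i - ∑ m ∈ t, φ m))
              - Cq * ((qc d t.card + qc d (t.card + 1))
                * (v (insert j t) - v ∅ - φ j - ∑ m ∈ t, φ m))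
              = Cq * ((qc d t.card + qc d (t.card + 1))
                  * (v (insert i t) - v (insert j t)))
                - Cq * ((qc d t.card + qc d (t.card + 1)) * D) := by
            intro t ht; rw [hD]; ring
          rw [Finset.sum_congr rfl this, Finset.sum_sub_distrib]
          rw [← Finset.mul_sum, ← Finset.mul_sum, ← hDsum]
          have h2 : ∑ t ∈ T, (qc d t.card + qc d (t.card + 1)) * D
              = (∑ t ∈ T, (qc d t.card + qc d (t.card + 1))) * D := by
            rw [Finset.sum_mul]
          rw [h2, hrsum, one_mul, sub_self]
      _ = ∑ t ∈ T, pSh d (insert j t) * (v (insert j t) - v ∅ - ∑ l ∈ insert j t, φ l) := by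
          refine Finset.sum_congr rfl fun t ht => ?_
          have ht' := ht
          simp only [hT, Finset.mem_filter, Finset.mem_univ, true_and] at ht'
          exact (hterm j t ht ht'.2 (hcard t ht)).symm
  rw [hsuff]

open Finset in
lemma shapley_efficiency {d : ℕ} (hd : 2 ≤ d) (v : Finset (Fin d) → ℝ) :
    ∑ i, shapleyValue d v i = v Finset.univ - v ∅ := by
  have hd0 : (0:ℝ) < (d:ℝ) := by positivity
  have step1 : ∀ i : Fin d, shapleyValue d v i
      = (∑ s ∈ Finset.univ.filter (fun s : Finset (Fin d) => i ∈ s),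
          qc d (s.card - 1) * v s)
        - ∑ s ∈ Finset.univ.filter (fun s : Finset (Fin d) => i ∉ s),
            qc d s.card * v s := by
    intro i
    rw [shapleyValue_eq]
    have hsplit : ∑ s ∈ Finset.univ.filter (fun s : Finset (Fin d) => i ∉ s),
        qc d s.card * (v (insert i s) - v s)
        = (∑ s ∈ Finset.univ.filter (fun s : Finset (Fin d) => i ∉ s),
            qc d s.card * v (insert i s))
          - ∑ s ∈ Finset.univ.filter (fun s : Finset (Fin d) => i ∉ s),
              qc d s.card * v s := by
      rw [← Finset.sum_sub_distrib]
      exact Finset.sum_congr rfl fun s _ => by ring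
    rw [hsplit]
    congr 1
    refine Finset.sum_nbij' (fun s => insert i s) (fun s => s.erase i) ?_ ?_ ?_ ?_ ?_
    · intro s hs
      simp only [Finset.mem_filter, Finset.mem_univ, true_and] at hs ⊢
      exact Finset.mem_insert_self i s
    · intro s hs
      simp only [Finset.mem_filter, Finset.mem_univ, true_and] at hs ⊢
      exact Finset.notMem_erase i s
    · intro s hs
      simp only [Finset.mem_filter, Finset.mem_univ, true_and] at hs
      exact Finset.erase_insert hs
    · intro s hs
      simp only [Finset.mem_filter, Finset.mem_univ, true_and] at hs
      exact Finset.insert_erase hs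
    · intro s hs
      simp only [Finset.mem_filter, Finset.mem_univ, true_and] at hs
      rw [Finset.card_insert_of_notMem hs, Nat.add_sub_cancel]
  rw [Finset.sum_congr rfl fun i _ => step1 i, Finset.sum_sub_distrib]
  have swapin : ∑ i : Fin d, ∑ s ∈ Finset.univ.filter (fun s : Finset (Fin d) => i ∈ s),
      qc d (s.card - 1) * v s
      = ∑ s : Finset (Fin d), (s.card : ℝ) * (qc d (s.card - 1) * v s) := by
    have h1 : ∀ i : Fin d, ∑ s ∈ Finset.univ.filter (fun s : Finset (Fin d) => i ∈ s),
        qc d (s.card - 1) * v s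
        = ∑ s : Finset (Fin d), if i ∈ s then qc d (s.card - 1) * v s else 0 := by
      intro i; rw [Finset.sum_filter]
    rw [Finset.sum_congr rfl fun i _ => h1 i, Finset.sum_comm]
    refine Finset.sum_congr rfl fun s _ => ?_
    have : ∀ i : Fin d, (if i ∈ s then qc d (s.card - 1) * v s else 0)
        = if i ∈ s then (fun _ : Fin d => qc d (s.card - 1) * v s) i else 0 := fun i => rfl
    rw [Finset.sum_congr rfl fun i _ => this i, Finset.sum_ite_mem, Finset.univ_inter,
      Finset.sum_const, nsmul_eq_mul]
  have swapout : ∑ i : Fin d, ∑ s ∈ Finset.univ.filter (fun s : Finset (Fin d) => i ∉ s),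
      qc d s.card * v s
      = ∑ s : Finset (Fin d), ((d:ℝ) - s.card) * (qc d s.card * v s) := by
    have h1 : ∀ i : Fin d, ∑ s ∈ Finset.univ.filter (fun s : Finset (Fin d) => i ∉ s),
        qc d s.card * v s
        = ∑ s : Finset (Fin d), if i ∈ sᶜ then qc d s.card * v s else 0 := by
      intro i
      rw [Finset.sum_filter]
      exact Finset.sum_congr rfl fun s _ => by simp [Finset.mem_compl]
    rw [Finset.sum_congr rfl fun i _ => h1 i, Finset.sum_comm]
    refine Finset.sum_congr rfl fun s _ => ?_
    rw [Finset.sum_ite_mem, Finset.univ_inter, Finset.sum_const, nsmul_eq_mul,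
      Finset.card_compl, Fintype.card_fin]
    have hsc : s.card ≤ d := by
      have := Finset.card_le_univ s; rwa [Fintype.card_fin] at this
    rw [Nat.cast_sub hsc]
  rw [swapin, swapout, ← Finset.sum_sub_distrib]
  have key : ∀ s : Finset (Fin d),
      (s.card : ℝ) * (qc d (s.card - 1) * v s) - ((d:ℝ) - s.card) * (qc d s.card * v s)
        = (if s = Finset.univ then v Finset.univ else 0) - (if s = ∅ then v ∅ else 0) := by
    intro s
    have hsc : s.card ≤ d := by
      have := Finset.card_le_univ s; rwa [Fintype.card_fin] at this
    by_cases h0 : s = ∅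
    · subst h0
      have hne : (∅ : Finset (Fin d)) ≠ Finset.univ := by
        intro h
        have h2 := congrArg Finset.card h
        rw [Finset.card_empty, Finset.card_univ, Fintype.card_fin] at h2
        omega
      rw [if_neg hne, if_pos rfl]
      have hq : qc d 0 = 1/(d:ℝ) := by
        rw [qc, Nat.choose_zero_right, Nat.cast_one, inv_one, mul_one]
      rw [Finset.card_empty, hq]
      push_cast
      field_simp
      ring
    · by_cases h1 : s = Finset.univ
      · subst h1
        have hcard : (Finset.univ : Finset (Fin d)).card = d := by
          rw [Finset.card_univ, Fintype.card_fin]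
        rw [hcard, if_pos rfl, if_neg h0]
        have hq : qc d (d-1) = 1/(d:ℝ) := by
          rw [qc, Nat.choose_self, Nat.cast_one, inv_one, mul_one]
        rw [hq]
        push_cast
        field_simp
        ring
      · have hlt : s.card < d := by
          rcases lt_or_eq_of_le hsc with h | h
          · exact h
          · exfalso; apply h1
            apply Finset.eq_univ_of_card
            rw [Fintype.card_fin]; exact h
        have hpos : 1 ≤ s.card := by
          rcases Nat.eq_zero_or_pos s.card with h | h
          · exfalso; exact h0 (Finset.card_eq_zero.mp h)
          · exact h
        rw [if_neg h1, if_neg h0, sub_zero]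
        have := eff_eq hd hpos (by omega : s.card ≤ d - 1)
        have heq : (s.card : ℝ) * qc d (s.card - 1) = ((d:ℝ) - s.card) * qc d s.card := this
        calc (s.card : ℝ) * (qc d (s.card - 1) * v s) - ((d:ℝ) - s.card) * (qc d s.card * v s)
            = ((s.card : ℝ) * qc d (s.card - 1) - ((d:ℝ) - s.card) * qc d s.card) * v s := by ring
          _ = 0 := by rw [heq]; ring
  rw [Finset.sum_congr rfl fun s _ => key s, Finset.sum_sub_distrib]
  rw [Finset.sum_ite_eq' Finset.univ (Finset.univ : Finset (Fin d)) (fun _ => v Finset.univ),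
    Finset.sum_ite_eq' Finset.univ (∅ : Finset (Fin d)) (fun _ => v ∅)]
  simp

/-- The Shapley values are the unique minimizer of the Shapley regression loss over the
affine constraint set `{φ : 1ᵀφ = v(1) - v(0)}`. -/
theorem shapley_unique_constrained_minimizer (d : ℕ) (hd : 2 ≤ d)
    (v : Finset (Fin d) → ℝ) :
    (∑ i, shapleyValue d v i = v Finset.univ - v ∅) ∧
    ∀ φ : EuclideanSpace ℝ (Fin d),
      ∑ i, φ i = v Finset.univ - v ∅ → φ ≠ shapleyValue d v →
        hLoss d v (shapleyValue d v) < hLoss d v φ := by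
  refine ⟨shapley_efficiency hd v, ?_⟩
  intro φ hφ hne
  set φs := shapleyValue d v with hφs
  set u : Fin d → ℝ := fun i => φ i - φs i with hu
  have hu0 : ∑ i, u i = 0 := by
    simp only [hu]
    rw [Finset.sum_sub_distrib, hφ, shapley_efficiency hd v, sub_self]
  have hune : ∃ i, u i ≠ 0 := by
    by_contra h
    push_neg at h
    apply hne
    ext i
    have := h i
    simp only [hu] at this
    linarith
  have hexp : hLoss d v φ = hLoss d v φs
      + (-2) * (∑ s : Finset (Fin d),
          pSh d s * (v s - v ∅ - ∑ l ∈ s, φs l) * (∑ l ∈ s, u l))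
      + ∑ s : Finset (Fin d), pSh d s * (∑ l ∈ s, u l) ^ 2 := by
    have hterm : ∀ s : Finset (Fin d), pSh d s * (v s - v ∅ - ∑ l ∈ s, φ l) ^ 2
        = pSh d s * (v s - v ∅ - ∑ l ∈ s, φs l) ^ 2
          + (-2) * (pSh d s * (v s - v ∅ - ∑ l ∈ s, φs l) * (∑ l ∈ s, u l))
          + pSh d s * (∑ l ∈ s, u l) ^ 2 := by
      intro s
      have hsum : ∑ l ∈ s, φ l = (∑ l ∈ s, φs l) + ∑ l ∈ s, u l := by
        rw [← Finset.sum_add_distrib]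
        exact Finset.sum_congr rfl fun l _ => by simp [hu]
      rw [hsum]
      ring
    rw [hLoss, hLoss]
    rw [Finset.sum_congr rfl fun s _ => hterm s,
      Finset.sum_add_distrib, Finset.sum_add_distrib, ← Finset.mul_sum]
  have hB : ∑ s : Finset (Fin d),
      pSh d s * (v s - v ∅ - ∑ l ∈ s, φs l) * (∑ l ∈ s, u l) = 0 := by
    have i0 : Fin d := ⟨0, by omega⟩
    have h1 : ∀ s : Finset (Fin d),
        pSh d s * (v s - v ∅ - ∑ l ∈ s, φs l) * (∑ l ∈ s, u l)
          = ∑ l : Fin d,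
              (if l ∈ s then pSh d s * (v s - v ∅ - ∑ m ∈ s, φs m) * u l else 0) := by
      intro s
      rw [Finset.sum_ite_mem Finset.univ s
        (fun l => pSh d s * (v s - v ∅ - ∑ m ∈ s, φs m) * u l), Finset.univ_inter,
        Finset.mul_sum]
    rw [Finset.sum_congr rfl fun s _ => h1 s, Finset.sum_comm]
    have h2 : ∀ l : Fin d, ∑ s : Finset (Fin d),
        (if l ∈ s then pSh d s * (v s - v ∅ - ∑ m ∈ s, φs m) * u l else 0)
          = gfun d v l * u l := by
      intro l
      rw [← Finset.sum_filter, gfun, Finset.sum_mul]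
    rw [Finset.sum_congr rfl fun l _ => h2 l]
    rw [Finset.sum_congr rfl fun l _ => by rw [g_eq hd v l i0]]
    rw [← Finset.mul_sum, hu0, mul_zero]
  have hA : 0 < ∑ s : Finset (Fin d), pSh d s * (∑ l ∈ s, u l) ^ 2 := by
    obtain ⟨i, hi⟩ := hune
    apply Finset.sum_pos'
    · intro s _
      exact mul_nonneg (pSh_nonneg hd s) (sq_nonneg _)
    · refine ⟨{i}, Finset.mem_univ _, ?_⟩
      have hc : ({i} : Finset (Fin d)).card = 1 := Finset.card_singleton i
      have hp : 0 < pSh d {i} := by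
        rw [pSh_eq_Pw (by rw [hc]; omega) (by rw [hc]; omega), hc]
        exact Pw_pos hd (by omega) (by omega)
      have hsu : ∑ l ∈ ({i} : Finset (Fin d)), u l = u i := Finset.sum_singleton _ _
      rw [hsu]
      exact mul_pos hp (by positivity)
  rw [hexp, hB]
  linarith
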